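/- arXiv:1904.01869 — 3 statements merged into one kernel-verified Lean document; each statement's English description precedes it below -/
import Mathlib

section
/- Suppose the LTI system (A,B,C,D) with m inputs and p outputs is (2r,2s)-sparse strongly observable. Consider two trajectories with initial states x¹, x², system inputs u¹_S, u²_S and system outputs y¹_S, y²_S, such that the difference sequence u¹_S(t)−u²_S(t) is supported (componentwise, uniformly in t) on a set of at most 2r input indices, and y¹_S(t)−y²_S(t) is supported on a set of at most 2s output indices. Then x¹ = x². -/
open Matrix

/-- State sequence of the discrete-time LTI system x(t+1)=Ax(t)+Bu(t). -/
def stSeq {n m : ℕ} (A : Matrix (Fin n) (Fin n) ℝ) (B : Matrix (Fin n) (Fin m) ℝ)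
    (x0 : Fin n → ℝ) (u : ℕ → Fin m → ℝ) : ℕ → Fin n → ℝ
  | 0 => x0
  | t + 1 => A.mulVec (stSeq A B x0 u t) + B.mulVec (u t)

/-- Output sequence y(t)=Cx(t)+Du(t). -/
def outSeq {n m p : ℕ} (A : Matrix (Fin n) (Fin n) ℝ) (B : Matrix (Fin n) (Fin m) ℝ)
    (C : Matrix (Fin p) (Fin n) ℝ) (D : Matrix (Fin p) (Fin m) ℝ)
    (x0 : Fin n → ℝ) (u : ℕ → Fin m → ℝ) (t : ℕ) : Fin p → ℝ :=
  C.mulVec (stSeq A B x0 u t) + D.mulVec (u t)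

/-- Strong observability of the subsystem obtained by treating the inputs in `Γu` as unknown
and keeping only the outputs in `Γy`: a zero output sequence on `Γy`, for any input sequence
supported on `Γu`, forces a zero initial state. -/
def SubStrongObs {n m p : ℕ} (A : Matrix (Fin n) (Fin n) ℝ) (B : Matrix (Fin n) (Fin m) ℝ)
    (C : Matrix (Fin p) (Fin n) ℝ) (D : Matrix (Fin p) (Fin m) ℝ)
    (Γu : Finset (Fin m)) (Γy : Finset (Fin p)) : Prop :=
  ∀ (x0 : Fin n → ℝ) (u : ℕ → Fin m → ℝ),
    (∀ (t : ℕ) (i : Fin m), i ∉ Γu → u t i = 0) →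
    (∀ t : ℕ, ∀ j ∈ Γy, outSeq A B C D x0 u t j = 0) → x0 = 0

/-- `(r,s)`-sparse strong observability: every subsystem with at most `r` unknown inputs and
at least `p - s` retained outputs is strongly observable. -/
def SparseStrongObs {n m p : ℕ} (A : Matrix (Fin n) (Fin n) ℝ) (B : Matrix (Fin n) (Fin m) ℝ)
    (C : Matrix (Fin p) (Fin n) ℝ) (D : Matrix (Fin p) (Fin m) ℝ) (r s : ℕ) : Prop :=
  ∀ (Γu : Finset (Fin m)) (Γy : Finset (Fin p)),
    Γu.card ≤ r → p - s ≤ Γy.card → SubStrongObs A B C D Γu Γy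

lemma stSeq_sub {n m : ℕ} (A : Matrix (Fin n) (Fin n) ℝ) (B : Matrix (Fin n) (Fin m) ℝ)
    (x1 x2 : Fin n → ℝ) (u1 u2 : ℕ → Fin m → ℝ) (t : ℕ) :
    stSeq A B (x1 - x2) (fun t => u1 t - u2 t) t = stSeq A B x1 u1 t - stSeq A B x2 u2 t := by
  induction t with
  | zero => rfl
  | succ t ih =>
    simp only [stSeq, ih, Matrix.mulVec_sub]
    abel

lemma outSeq_sub {n m p : ℕ} (A : Matrix (Fin n) (Fin n) ℝ) (B : Matrix (Fin n) (Fin m) ℝ)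
    (C : Matrix (Fin p) (Fin n) ℝ) (D : Matrix (Fin p) (Fin m) ℝ)
    (x1 x2 : Fin n → ℝ) (u1 u2 : ℕ → Fin m → ℝ) (t : ℕ) :
    outSeq A B C D (x1 - x2) (fun t => u1 t - u2 t) t
      = outSeq A B C D x1 u1 t - outSeq A B C D x2 u2 t := by
  simp only [outSeq, stSeq_sub, Matrix.mulVec_sub]
  abel

/-- under (2r,2s)-sparse strong observability, two trajectories whose system
inputs differ on at most 2r input channels and whose system outputs differ on at most 2s
output channels must have the same initial state. -/
theorem sparse_strong_obs_distinguishes {n m p : ℕ}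
    (A : Matrix (Fin n) (Fin n) ℝ) (B : Matrix (Fin n) (Fin m) ℝ)
    (C : Matrix (Fin p) (Fin n) ℝ) (D : Matrix (Fin p) (Fin m) ℝ) (r s : ℕ)
    (hso : SparseStrongObs A B C D (2 * r) (2 * s))
    (x1 x2 : Fin n → ℝ) (u1 u2 : ℕ → Fin m → ℝ)
    (hu : ∃ Γu : Finset (Fin m), Γu.card ≤ 2 * r ∧
      ∀ (t : ℕ) (i : Fin m), i ∉ Γu → u1 t i = u2 t i)
    (hy : ∃ Γ : Finset (Fin p), Γ.card ≤ 2 * s ∧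
      ∀ (t : ℕ) (j : Fin p), j ∉ Γ → outSeq A B C D x1 u1 t j = outSeq A B C D x2 u2 t j) :
    x1 = x2 := by
  obtain ⟨Γu, hΓu, hu⟩ := hu
  obtain ⟨Γ, hΓ, hy⟩ := hy
  have h := hso Γu Γᶜ hΓu (by
    rw [Finset.card_compl]
    simp only [Fintype.card_fin]
    omega)
  have key : x1 - x2 = 0 := by
    apply h (x1 - x2) (fun t => u1 t - u2 t)
    · intro t i hi
      simp [hu t i hi]
    · intro t j hj
      rw [outSeq_sub]
      simp [hy t j (Finset.mem_compl.mp hj)]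
  have := sub_eq_zero.mp key
  exact this
end

section
/- For an LTI system with p outputs, if the system is (0,2s)-sparse strongly observable then s ≤ ⌊p/2⌋; equivalently, no LTI system with p outputs can tolerate more than ⌊p/2⌋ attacked outputs, since (0,2s)-sparse strong observability requires p−2s ≥ 0 with at least one remaining output contributing a nontrivial observability condition when the state space is nontrivial (n ≥ 1). -/
open Matrix

/-- for a system of order n ≥ 1 with p outputs, (0,2s)-sparse strong
observability forces s ≤ ⌊p/2⌋: no LTI system can tolerate more than ⌊p/2⌋ attacked
outputs. -/
theorem sparse_strong_obs_output_bound {n m p : ℕ} (hn : 1 ≤ n)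
    (A : Matrix (Fin n) (Fin n) ℝ) (B : Matrix (Fin n) (Fin m) ℝ)
    (C : Matrix (Fin p) (Fin n) ℝ) (D : Matrix (Fin p) (Fin m) ℝ)
    (s : ℕ) (h : SparseStrongObs A B C D 0 (2 * s)) :
    s ≤ p / 2 := by
  by_contra hs
  push_neg at hs
  have hp : p - 2 * s = 0 := by omega
  have hso := h ∅ ∅ (by simp) (by simp [hp])
  have := hso (fun _ => 1) (fun _ _ => 0) (by simp) (by simp)
  have : (1 : ℝ) = 0 := congrFun this ⟨0, hn⟩
  norm_num at this
end

section
/- If for all admissible candidate sets the stacked matrix [O_{Γ_y}, N_{Γ_u→Γ_y}] is generically full rank, then any certificate (a set of inputs Γ̄_u and outputs Γ_y witnessing infeasibility of the exact batch equation) must satisfy n|Γ_y| ≥ n(1+|Γ_u|), i.e., |Γ_y| ≥ 1+|Γ_u|; consequently the certificate size |Γ̄_u| + |Γ_y| = m − |Γ_u| + |Γ_y| is at least m+1. -/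
open Matrix

/-- for a generic system (the stacked matrix M = [O_{Γy}, N_{Γu→Γy}] of size
n|Γy| × n(1+|Γu|) is full rank), a certificate — i.e. data for which the exact batch
equation Y = O x̂ + N Û is infeasible — forces n|Γy| ≥ n(1+|Γu|), i.e. |Γy| ≥ 1 + |Γu|;
hence the certificate size (m − |Γu|) + |Γy| is at least m + 1. -/
theorem certificate_size_lower_bound {n m p : ℕ} (hn : 1 ≤ n)
    (Γu : Finset (Fin m)) (Γy : Finset (Fin p))
    (O : Matrix (Fin Γy.card × Fin n) (Fin n) ℝ)
    (N : Matrix (Fin Γy.card × Fin n) (Fin Γu.card × Fin n) ℝ)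
    (hrank : (Matrix.fromCols O N).rank =
      min (Fintype.card (Fin Γy.card × Fin n))
          (Fintype.card (Fin n ⊕ Fin Γu.card × Fin n)))
    (hfail : ∃ Y : Fin Γy.card × Fin n → ℝ,
      ¬ ∃ (x : Fin n → ℝ) (U : Fin Γu.card × Fin n → ℝ),
        Y = O.mulVec x + N.mulVec U) :
    1 + Γu.card ≤ Γy.card ∧ m + 1 ≤ (m - Γu.card) + Γy.card := by
  have hc : Γu.card ≤ m := by simpa using Γu.card_le_univ.trans_eq (by simp)
  have h1 : 1 + Γu.card ≤ Γy.card := by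
    by_contra hlt
    push_neg at hlt
    -- then rows ≤ cols, full rank ⇒ surjective ⇒ contradiction with hfail
    have hcards : Fintype.card (Fin Γy.card × Fin n) ≤
        Fintype.card (Fin n ⊕ Fin Γu.card × Fin n) := by
      simp only [Fintype.card_prod, Fintype.card_sum, Fintype.card_fin]
      nlinarith
    rw [min_eq_left hcards] at hrank
    have hsurj : Function.Surjective (Matrix.fromCols O N).mulVecLin := by
      rw [← LinearMap.range_eq_top]
      apply Submodule.eq_top_of_finrank_eq
      rw [← Matrix.rank, hrank]
      simp [Module.finrank_pi]
    obtain ⟨Y, hY⟩ := hfail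
    obtain ⟨v, hv⟩ := hsurj Y
    exact hY ⟨v ∘ Sum.inl, v ∘ Sum.inr, by
      rw [← hv, Matrix.mulVecLin_apply]
      have hvv : v = Sum.elim (v ∘ Sum.inl) (v ∘ Sum.inr) := by ext (a|b) <;> rfl
      rw [hvv, Matrix.fromCols_mulVec_sumElim]; simp⟩
  exact ⟨h1, by omega⟩
end
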